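/- Let r₀ ∈ ℝ, m ∈ ℂ, let U ⊆ ℂ be an open disk centered at r₀, and let E : U → M₂(ℂ) be holomorphic (entrywise) with det E(z) = 1 for all z ∈ U. Define Ψ(z) := E(z)·[[1, (m/(2πi))·Log(z − r₀)],[0,1]] for z ∈ U \ (−∞, r₀], where Log is the principal branch of the logarithm. Then Ψ(z) is invertible for every such z, and on U \ (−∞, r₀] one has the identity ((dΨ/dz)(z)·Ψ(z)^{-1})_{21} = (E'(z)·E(z)^{-1})_{21} − (m/(2πi))·E_{21}(z)²/(z − r₀). In particular, the function z ↦ ((dΨ/dz)(z)·Ψ(z)^{-1})_{21} extends to a meromorphic function on U whose only possible singularity is a simple pole at r₀ with residue −(m/(2πi))·E_{21}(r₀)². -/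

import Mathlib

open Matrix

/-- Let `E` be holomorphic on an open disk `U` centered at `r₀ ∈ ℝ`, with
`det E ≡ 1`, and define `Ψ(z) := E(z)·[[1, (m/(2πi))·Log(z − r₀)],[0,1]]` on `U` minus the cut
`(−∞, r₀]`. Then `Ψ(z)` is invertible there, the identity
`((dΨ/dz)Ψ⁻¹)₂₁ = ((dE/dz)E⁻¹)₂₁ − (m/(2πi))·E₂₁(z)²/(z − r₀)` holds, and in particular
`((dΨ/dz)Ψ⁻¹)₂₁` differs from the simple-pole term with residue `−(m/(2πi))·E₂₁(r₀)²` at `r₀`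
by a function holomorphic on `U`. -/
theorem stmt_13 (r₀ : ℝ) (m : ℂ) (ε : ℝ) (hε : 0 < ε)
    (E : ℂ → Matrix (Fin 2) (Fin 2) ℂ)
    (hE : ∀ i j, DifferentiableOn ℂ (fun z => E z i j) (Metric.ball (r₀ : ℂ) ε))
    (hdet : ∀ z ∈ Metric.ball (r₀ : ℂ) ε, (E z).det = 1)
    (Ψ : ℂ → Matrix (Fin 2) (Fin 2) ℂ)
    (hΨ : ∀ z : ℂ, Ψ z =
      E z * !![1, (m / (2 * Real.pi * Complex.I)) * Complex.log (z - (r₀ : ℂ)); 0, 1]) :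
    (∀ z ∈ Metric.ball (r₀ : ℂ) ε \ {z : ℂ | z.im = 0 ∧ z.re ≤ r₀}, IsUnit (Ψ z)) ∧
    (∀ z ∈ Metric.ball (r₀ : ℂ) ε \ {z : ℂ | z.im = 0 ∧ z.re ≤ r₀},
      ((Matrix.of fun i j => deriv (fun ζ => Ψ ζ i j) z) * (Ψ z)⁻¹) 1 0
        = ((Matrix.of fun i j => deriv (fun ζ => E ζ i j) z) * (E z)⁻¹) 1 0
          - (m / (2 * Real.pi * Complex.I)) * (E z 1 0) ^ 2 / (z - (r₀ : ℂ))) ∧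
    (∃ g : ℂ → ℂ, DifferentiableOn ℂ g (Metric.ball (r₀ : ℂ) ε) ∧
      ∀ z ∈ Metric.ball (r₀ : ℂ) ε \ {z : ℂ | z.im = 0 ∧ z.re ≤ r₀},
        ((Matrix.of fun i j => deriv (fun ζ => Ψ ζ i j) z) * (Ψ z)⁻¹) 1 0
          = g z + (-(m / (2 * Real.pi * Complex.I)) * (E (r₀ : ℂ) 1 0) ^ 2)
              / (z - (r₀ : ℂ))) := by
  set k : ℂ := m / (2 * Real.pi * Complex.I) with hk
  set B := Metric.ball (r₀ : ℂ) ε with hB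
  have hBo : IsOpen B := Metric.isOpen_ball
  -- entries of Ψ as functions
  have hΨ10 : ∀ ζ : ℂ, Ψ ζ 1 0 = E ζ 1 0 := by
    intro ζ
    rw [hΨ]
    simp [Matrix.mul_apply, Fin.sum_univ_two]
  have hΨ11 : ∀ ζ : ℂ, Ψ ζ 1 1 = E ζ 1 0 * (k * Complex.log (ζ - (r₀ : ℂ))) + E ζ 1 1 := by
    intro ζ
    rw [hΨ]
    simp [Matrix.mul_apply, Fin.sum_univ_two]
  -- cut facts
  have cut : ∀ z ∈ B \ {z : ℂ | z.im = 0 ∧ z.re ≤ r₀},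
      z - (r₀ : ℂ) ≠ 0 ∧ z - (r₀ : ℂ) ∈ Complex.slitPlane := by
    rintro z ⟨hz1, hz2⟩
    simp only [Set.mem_setOf_eq, not_and, not_le] at hz2
    have hsl : z - (r₀ : ℂ) ∈ Complex.slitPlane := by
      rw [Complex.mem_slitPlane_iff]
      rcases eq_or_ne z.im 0 with h | h
      · left; simpa [Complex.sub_re] using sub_pos.mpr (hz2 h)
      · right; simpa [Complex.sub_im] using h
    exact ⟨Complex.slitPlane_ne_zero hsl, hsl⟩
  -- det of Ψ
  have hdetΨ : ∀ z ∈ B, (Ψ z).det = 1 := by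
    intro z hz
    rw [hΨ, Matrix.det_mul, hdet z hz, Matrix.det_fin_two_of]
    ring
  have hEinv : ∀ z ∈ B, (E z)⁻¹ = !![E z 1 1, -(E z 0 1); -(E z 1 0), E z 0 0] := by
    intro z hz
    rw [Matrix.inv_def, hdet z hz, Matrix.adjugate_fin_two]
    simp
  have hΨinv : ∀ z ∈ B, (Ψ z)⁻¹ = !![Ψ z 1 1, -(Ψ z 0 1); -(Ψ z 1 0), Ψ z 0 0] := by
    intro z hz
    rw [Matrix.inv_def, hdetΨ z hz, Matrix.adjugate_fin_two]
    simp
  -- E-side expression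
  have hEside : ∀ z ∈ B, ((Matrix.of fun i j => deriv (fun ζ => E ζ i j) z) * (E z)⁻¹) 1 0
      = deriv (fun ζ => E ζ 1 0) z * E z 1 1 - deriv (fun ζ => E ζ 1 1) z * E z 1 0 := by
    intro z hz
    rw [Matrix.mul_apply, Fin.sum_univ_two, hEinv z hz]
    simp only [Matrix.of_apply, Matrix.cons_val', Matrix.cons_val_zero, Matrix.cons_val_one,
      Matrix.head_cons, Matrix.head_fin_const, Matrix.empty_val', Matrix.cons_val_fin_one]
    ring
  -- main computation
  have main : ∀ z ∈ B \ {z : ℂ | z.im = 0 ∧ z.re ≤ r₀},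
      ((Matrix.of fun i j => deriv (fun ζ => Ψ ζ i j) z) * (Ψ z)⁻¹) 1 0
        = deriv (fun ζ => E ζ 1 0) z * E z 1 1 - deriv (fun ζ => E ζ 1 1) z * E z 1 0
          - k * (E z 1 0) ^ 2 / (z - (r₀ : ℂ)) := by
    intro z hz
    obtain ⟨hz0, hsl⟩ := cut z hz
    obtain ⟨hz1, -⟩ := hz
    have hmem : B ∈ nhds z := hBo.mem_nhds hz1
    have hc : HasDerivAt (fun ζ => E ζ 1 0) (deriv (fun ζ => E ζ 1 0) z) z :=
      ((hE 1 0).differentiableAt hmem).hasDerivAt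
    have hd : HasDerivAt (fun ζ => E ζ 1 1) (deriv (fun ζ => E ζ 1 1) z) z :=
      ((hE 1 1).differentiableAt hmem).hasDerivAt
    have hlog : HasDerivAt (fun ζ : ℂ => Complex.log (ζ - (r₀ : ℂ))) (z - (r₀ : ℂ))⁻¹ z := by
      have h2 : HasDerivAt (fun ζ : ℂ => ζ - (r₀ : ℂ)) 1 z := (hasDerivAt_id z).sub_const _
      exact ((Complex.hasDerivAt_log hsl).comp z h2).congr_deriv (mul_one _)
    have hd10 : deriv (fun ζ => Ψ ζ 1 0) z = deriv (fun ζ => E ζ 1 0) z := by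
      congr 1; funext ζ; exact hΨ10 ζ
    have hd11 : deriv (fun ζ => Ψ ζ 1 1) z
        = deriv (fun ζ => E ζ 1 0) z * (k * Complex.log (z - (r₀ : ℂ)))
          + E z 1 0 * (k * (z - (r₀ : ℂ))⁻¹) + deriv (fun ζ => E ζ 1 1) z := by
      have h : HasDerivAt (fun ζ => Ψ ζ 1 1)
          (deriv (fun ζ => E ζ 1 0) z * (k * Complex.log (z - (r₀ : ℂ)))
            + E z 1 0 * (k * (z - (r₀ : ℂ))⁻¹) + deriv (fun ζ => E ζ 1 1) z) z := by
        have h := (hc.mul (hlog.const_mul k)).add hd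
        exact h.congr_of_eventuallyEq (Filter.Eventually.of_forall fun ζ => by simp [hΨ11])
      exact h.deriv
    rw [Matrix.mul_apply, Fin.sum_univ_two, hΨinv z hz1]
    simp only [Matrix.of_apply, Matrix.cons_val', Matrix.cons_val_zero, Matrix.cons_val_one,
      Matrix.head_cons, Matrix.head_fin_const, Matrix.empty_val', Matrix.cons_val_fin_one]
    rw [hd10, hd11, hΨ10, hΨ11]
    field_simp
    ring
  refine ⟨?_, ?_, ?_⟩
  · rintro z ⟨hz1, _⟩
    rw [Matrix.isUnit_iff_isUnit_det, hdetΨ z hz1]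
    exact isUnit_one
  · intro z hz
    rw [main z hz, hEside z hz.1]
  · refine ⟨fun z => deriv (fun ζ => E ζ 1 0) z * E z 1 1 - deriv (fun ζ => E ζ 1 1) z * E z 1 0
      - k * dslope (fun ζ => (E ζ 1 0) ^ 2) (r₀ : ℂ) z, ?_, ?_⟩
    · have h10an : AnalyticOnNhd ℂ (fun ζ => E ζ 1 0) B := (hE 1 0).analyticOnNhd hBo
      have h11an : AnalyticOnNhd ℂ (fun ζ => E ζ 1 1) B := (hE 1 1).analyticOnNhd hBo
      have hds : DifferentiableOn ℂ (dslope (fun ζ => (E ζ 1 0) ^ 2) (r₀ : ℂ)) B :=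
        (Complex.differentiableOn_dslope (hBo.mem_nhds (Metric.mem_ball_self hε))).mpr
          ((hE 1 0).pow 2)
      exact (((h10an.deriv.differentiableOn).mul (hE 1 1)).sub
        ((h11an.deriv.differentiableOn).mul (hE 1 0))).sub (hds.const_mul k)
    · intro z hz
      obtain ⟨hz0, -⟩ := cut z hz
      have hzne : z ≠ (r₀ : ℂ) := sub_ne_zero.mp hz0
      simp only [main z hz, dslope_of_ne _ hzne, slope_def_field]
      field_simp
      ring
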